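/- arXiv:1710.05516 — 6 statements merged into one kernel-verified Lean document; each statement's English description precedes it below -/
import Mathlib

section
/- Let X₁, X₂ be ℤ-modules with X₂ torsion-free, let f : X₂ → X₁ be a surjective ℤ-module homomorphism, and let P ⊆ X₂ be a submodule such that the restriction of f to P is injective. Let P^⊤ = {x ∈ X₂ : n·x ∈ P for some integer n > 0}, set A = X₁/f(P^⊤), let h₁ : X₁ → A be the canonical projection, and let h₂ : X₂/P^⊤ → A be the well-defined map h₂(x + P^⊤) = f(x) + f(P^⊤). Then the map φ : X₂ → X₁ ⊕ (X₂/P^⊤) defined by φ(x) = (f(x), x + P^⊤) is an injective ℤ-module homomorphism whose image is exactly the fibre product X₁ ⊕_A (X₂/P^⊤) = {(x₁, y) : h₁(x₁) = h₂(y)}, and f = p₁ ∘ φ where p₁ is the projection of the fibre product onto X₁. -/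
/-- The fibre product `X₁ ⊕_A X₂` of two module homomorphisms `h₁ : X₁ → A`,
`h₂ : X₂ → A`, as a submodule of `X₁ × X₂`. -/
def fibreProd {R X₁ X₂ A : Type*} [Semiring R] [AddCommMonoid X₁] [AddCommMonoid X₂]
    [AddCommMonoid A] [Module R X₁] [Module R X₂] [Module R A]
    (h₁ : X₁ →ₗ[R] A) (h₂ : X₂ →ₗ[R] A) : Submodule R (X₁ × X₂) where
  carrier := {p | h₁ p.1 = h₂ p.2}
  add_mem' := by
    intro a b ha hb
    simp only [Set.mem_setOf_eq, Prod.fst_add, Prod.snd_add, map_add] at *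
    rw [ha, hb]
  zero_mem' := by simp
  smul_mem' := by
    intro c a ha
    simp only [Set.mem_setOf_eq, Prod.smul_fst, Prod.smul_snd, map_smul] at *
    rw [ha]

/-- The first projection `p₁` of the fibre product. -/
def fpFst {R X₁ X₂ A : Type*} [Semiring R] [AddCommMonoid X₁] [AddCommMonoid X₂]
    [AddCommMonoid A] [Module R X₁] [Module R X₂] [Module R A]
    (h₁ : X₁ →ₗ[R] A) (h₂ : X₂ →ₗ[R] A) : fibreProd h₁ h₂ →ₗ[R] X₁ :=
  LinearMap.fst R X₁ X₂ ∘ₗ (fibreProd h₁ h₂).subtype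

/-- The second projection `p₂` of the fibre product. -/
def fpSnd {R X₁ X₂ A : Type*} [Semiring R] [AddCommMonoid X₁] [AddCommMonoid X₂]
    [AddCommMonoid A] [Module R X₁] [Module R X₂] [Module R A]
    (h₁ : X₁ →ₗ[R] A) (h₂ : X₂ →ₗ[R] A) : fibreProd h₁ h₂ →ₗ[R] X₂ :=
  LinearMap.snd R X₁ X₂ ∘ₗ (fibreProd h₁ h₂).subtype

/-- On a submodule of a ℤ-module we always use the induced module structure. -/
instance (priority := 10000) submoduleIntModule {M : Type*} [AddCommGroup M] [Module ℤ M]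
    (p : Submodule ℤ M) : Module ℤ p := p.module

/-- On a quotient of a ℤ-module we always use the induced module structure. -/
instance (priority := 10000) quotientIntModule {M : Type*} [AddCommGroup M] [Module ℤ M]
    (p : Submodule ℤ M) : Module ℤ (M ⧸ p) := Submodule.Quotient.module p

/-- On a product of ℤ-modules we always use the product module structure. -/
instance (priority := 10000) prodIntModule {M N : Type*} [AddCommGroup M] [AddCommGroup N]
    [Module ℤ M] [Module ℤ N] : Module ℤ (M × N) := Prod.instModule

/-- The saturation `P^⊤ = {x ∈ X : n • x ∈ P for some integer n > 0}` of a submodule `P`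
of a ℤ-module `X`. -/
def saturation {X : Type*} [AddCommGroup X] (P : Submodule ℤ X) :
    Submodule ℤ X where
  carrier := {x | ∃ n : ℤ, 0 < n ∧ n • x ∈ P}
  zero_mem' := ⟨1, one_pos, by simp⟩
  add_mem' := by
    rintro x y ⟨n, hn, hx⟩ ⟨m, hm, hy⟩
    refine ⟨n * m, mul_pos hn hm, ?_⟩
    have h1 : (n * m) • (x + y) = m • (n • x) + n • (m • y) := by
      rw [smul_add, mul_comm n m, mul_smul, mul_comm m n, mul_smul]
    rw [h1]
    exact P.add_mem (P.smul_mem m hx) (P.smul_mem n hy)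
  smul_mem' := by
    rintro c x ⟨n, hn, hx⟩
    exact ⟨n, hn, by rw [smul_comm]; exact P.smul_mem c hx⟩

/-- Let `X₂` be a torsion-free ℤ-module, `f : X₂ → X₁` a surjective
ℤ-module homomorphism and `P ⊆ X₂` a submodule on which `f` is injective. With
`A = X₁ / f(P^⊤)`, `h₁ : X₁ → A` the canonical projection and
`h₂ : X₂/P^⊤ → A`, `h₂(x + P^⊤) = f(x) + f(P^⊤)`, the induced map, the map
`φ(x) = (f x, x + P^⊤)` is an injective ℤ-module homomorphism `X₂ → X₁ ⊕ (X₂/P^⊤)` whose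
image is exactly the fibre product `X₁ ⊕_A (X₂/P^⊤)`, and `f = p₁ ∘ φ`. -/
theorem derived_embedding_central_product
    {X₁ X₂ : Type*} [AddCommGroup X₁] [AddCommGroup X₂]
    [NoZeroSMulDivisors ℤ X₂]
    (f : X₂ →ₗ[ℤ] X₁) (hf : Function.Surjective f)
    (P : Submodule ℤ X₂) (hinj : Set.InjOn f (P : Set X₂)) :
    Function.Injective (f.prod (saturation P).mkQ) ∧
    LinearMap.range (f.prod (saturation P).mkQ) =
      fibreProd (Submodule.map f (saturation P)).mkQ
        (Submodule.mapQ (saturation P) (Submodule.map f (saturation P)) f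
          (fun x hx => Submodule.mem_comap.mpr (Submodule.mem_map_of_mem hx))) ∧
    (∀ x : X₂, f x = (f.prod (saturation P).mkQ x).1) := by
  have hker : ∀ x : X₂, f x = 0 → x ∈ saturation P → x = 0 := by
    rintro x hfx ⟨n, hn, hnx⟩
    have h0 : f (n • x) = f 0 := by simp [hfx]
    have := hinj hnx (Submodule.zero_mem P) h0
    exact (smul_eq_zero.mp this).resolve_left (by exact_mod_cast hn.ne')
  refine ⟨?_, ?_, fun x => rfl⟩
  · rw [← LinearMap.ker_eq_bot, eq_bot_iff]
    rintro x hx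
    simp only [LinearMap.mem_ker, LinearMap.prod_apply, Function.prod, Prod.mk_eq_zero,
      Submodule.mkQ_apply, Submodule.Quotient.mk_eq_zero] at hx
    exact hker x hx.1 hx.2
  · apply le_antisymm
    · rintro ⟨x₁, y⟩ ⟨x, hx⟩
      obtain ⟨rfl, rfl⟩ := Prod.ext_iff.mp hx
      show (Submodule.map f (saturation P)).mkQ (f x) = _
      simp [Submodule.mapQ_apply]
    · rintro ⟨x₁, y⟩ hmem
      obtain ⟨x, rfl⟩ := Submodule.mkQ_surjective _ y
      have h : (Submodule.map f (saturation P)).mkQ x₁ =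
          (Submodule.map f (saturation P)).mkQ (f x) := by
        simpa [Submodule.mapQ_apply] using (show (Submodule.map f (saturation P)).mkQ x₁ = _ from hmem)
      rw [Submodule.mkQ_apply, Submodule.mkQ_apply, Submodule.Quotient.eq] at h
      obtain ⟨p, hp, hfp⟩ := h
      refine ⟨x + p, ?_⟩
      have : (saturation P).mkQ (x + p) = (saturation P).mkQ x := by
        rw [Submodule.mkQ_apply, Submodule.mkQ_apply, Submodule.Quotient.eq]
        simpa using hp
      apply Prod.ext
      · show f (x + p) = x₁
        rw [map_add, hfp]; abel
      · exact this
end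

section
/- Let n ≥ 1 be an integer, let T be a free ℤ-module of finite rank at least 2, and let f : T → ℤ/nℤ be a surjective ℤ-module homomorphism. Then every automorphism ψ of ℤ/nℤ is tame with respect to (T, f): there exists an automorphism τ of T with ψ ∘ f = f ∘ τ. (The rank-2 case is achieved by an automorphism of T of determinant 1, obtained from a Bézout identity k·a + n·b = 1.) -/
lemma tame_aux {R : Type*} [CommRing R] {T : Type*} [AddCommGroup T] [Module R T]
    (F G : T →ₗ[R] R) (t0 w : T)
    (hFt0 : F t0 = 1) (hFw : F w = 0) (hGt0 : G t0 = 0) (hGw : G w = 1)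
    (p q r s : R) (hdet : p * s - q * r = 1) :
    ∃ τ : T ≃ₗ[R] T, ∀ t, F (τ t) = p * F t + q * G t := by
  set τℓ : T →ₗ[R] T :=
    LinearMap.id + ((p - 1) • F + q • G).smulRight t0 + (r • F + (s - 1) • G).smulRight w
    with hτℓ
  set σℓ : T →ₗ[R] T :=
    LinearMap.id + ((s - 1) • F + (-q) • G).smulRight t0 + ((-r) • F + (p - 1) • G).smulRight w
    with hσℓ
  have happτ : ∀ t, τℓ t = t + ((p - 1) * F t + q * G t) • t0 + (r * F t + (s - 1) * G t) • w := by
    intro t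
    rw [hτℓ]
    simp only [LinearMap.add_apply, LinearMap.id_apply, LinearMap.smulRight_apply,
      LinearMap.smul_apply, smul_eq_mul]
  have happσ : ∀ t, σℓ t = t + ((s - 1) * F t + (-q) * G t) • t0
      + ((-r) * F t + (p - 1) * G t) • w := by
    intro t
    rw [hσℓ]
    simp only [LinearMap.add_apply, LinearMap.id_apply, LinearMap.smulRight_apply,
      LinearMap.smul_apply, smul_eq_mul]
  have hτF : ∀ t, F (τℓ t) = p * F t + q * G t := by
    intro t; rw [happτ]
    simp only [map_add, map_smul, smul_eq_mul, hFt0, hFw]; ring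
  have hτG : ∀ t, G (τℓ t) = r * F t + s * G t := by
    intro t; rw [happτ]
    simp only [map_add, map_smul, smul_eq_mul, hGt0, hGw]; ring
  have hσF : ∀ t, F (σℓ t) = s * F t + (-q) * G t := by
    intro t; rw [happσ]
    simp only [map_add, map_smul, smul_eq_mul, hFt0, hFw]; ring
  have hσG : ∀ t, G (σℓ t) = (-r) * F t + p * G t := by
    intro t; rw [happσ]
    simp only [map_add, map_smul, smul_eq_mul, hGt0, hGw]; ring
  have hστ : σℓ.comp τℓ = LinearMap.id := by
    ext t
    simp only [LinearMap.comp_apply, LinearMap.id_apply]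
    rw [happσ (τℓ t), hτF, hτG, happτ t]
    rw [show ((s - 1) * (p * F t + q * G t) + (-q) * (r * F t + s * G t))
          = -((p - 1) * F t + q * G t) by linear_combination (F t) * hdet,
        show ((-r) * (p * F t + q * G t) + (p - 1) * (r * F t + s * G t))
          = -(r * F t + (s - 1) * G t) by linear_combination (G t) * hdet,
        neg_smul, neg_smul]
    abel
  have hτσ : τℓ.comp σℓ = LinearMap.id := by
    ext t
    simp only [LinearMap.comp_apply, LinearMap.id_apply]
    rw [happτ (σℓ t), hσF, hσG, happσ t]
    rw [show ((p - 1) * (s * F t + (-q) * G t) + q * ((-r) * F t + p * G t))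
          = -((s - 1) * F t + (-q) * G t) by linear_combination (F t) * hdet,
        show (r * (s * F t + (-q) * G t) + (s - 1) * ((-r) * F t + p * G t))
          = -((-r) * F t + (p - 1) * G t) by linear_combination (G t) * hdet,
        neg_smul, neg_smul]
    abel
  exact ⟨LinearEquiv.ofLinear τℓ σℓ hτσ hστ, fun t => hτF t⟩

/-- Let `n ≥ 1`, let `T` be a free ℤ-module of finite rank at least 2 and
let `f : T → ℤ/nℤ` be a surjective ℤ-module homomorphism. Then every automorphism `ψ` of
`ℤ/nℤ` is tame with respect to `(T, f)`: there is an automorphism `τ` of `T` with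
`ψ ∘ f = f ∘ τ`. -/
theorem tame_rank_ge_two (n : ℕ) (hn : 1 ≤ n)
    {T : Type*} [AddCommGroup T] [Module ℤ T] [Module.Free ℤ T] [Module.Finite ℤ T]
    (hrk : 2 ≤ Module.finrank ℤ T)
    (f : T →ₗ[ℤ] ZMod n) (hf : Function.Surjective f)
    (ψ : ZMod n ≃+ ZMod n) :
    ∃ τ : T ≃ₗ[ℤ] T, ∀ t : T, ψ (f t) = f (τ t) := by
  -- normalize the ℤ-module structure to the canonical one
  rename_i iAG iM iFree iFin
  haveI : Unique (Module ℤ T) := AddCommGroup.uniqueIntModule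
  have hM : iM = AddCommGroup.toIntModule T := Subsingleton.elim _ _
  subst hM
  rcases eq_or_lt_of_le hn with h1 | h2
  · -- n = 1 : everything is trivial
    refine ⟨LinearEquiv.refl ℤ T, fun t => ?_⟩
    haveI : Subsingleton (ZMod n) := by subst h1; infer_instance
    exact Subsingleton.elim _ _
  haveI : NeZero n := ⟨by omega⟩
  haveI : Fact (1 < n) := ⟨h2⟩
  -- ψ is multiplication by the unit ψ 1
  have hψmul : ∀ x : ZMod n, ψ x = x * ψ 1 := by
    intro x
    have hx : x.val • (1 : ZMod n) = x := by
      rw [nsmul_eq_mul, mul_one, ZMod.natCast_zmod_val]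
    calc ψ x = ψ (x.val • 1) := by rw [hx]
      _ = x.val • ψ 1 := map_nsmul ψ _ _
      _ = x * ψ 1 := by rw [nsmul_eq_mul, ZMod.natCast_zmod_val]
  have hunit : IsUnit (ψ 1) := by
    obtain ⟨y, hy⟩ := ψ.surjective 1
    rw [hψmul y] at hy
    exact IsUnit.of_mul_eq_one _ (by rw [mul_comm]; exact hy)
  have hcop : Nat.Coprime (ψ 1).val n := by
    rw [← ZMod.isUnit_iff_coprime]
    rwa [ZMod.natCast_zmod_val]
  -- integer Bezout data
  have hcopZ : IsCoprime (((ψ 1).val : ℤ)) (n : ℤ) := by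
    rw [Int.isCoprime_iff_gcd_eq_one, Int.gcd_natCast_natCast]
    exact hcop
  obtain ⟨a, b, hab⟩ := hcopZ
  -- the linear functional F with f = (· : ZMod n) ∘ F
  set bT := Module.Free.chooseBasis ℤ T with hbT
  obtain ⟨F, hFb⟩ : ∃ F : T →ₗ[ℤ] ℤ, ∀ i, F (bT i) = ((f (bT i)).val : ℤ) :=
    ⟨bT.constr ℤ _, fun i => bT.constr_basis ℤ _ i⟩
  have hfF : ∀ t, f t = ((F t : ℤ) : ZMod n) := by
    have hcomp : f = (LinearMap.toSpanSingleton ℤ (ZMod n) 1) ∘ₗ F := by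
      apply bT.ext
      intro i
      rw [LinearMap.comp_apply, hFb i, LinearMap.toSpanSingleton_apply, zsmul_eq_mul, mul_one]
      push_cast
      rw [ZMod.natCast_zmod_val]
    intro t
    rw [hcomp, LinearMap.comp_apply, LinearMap.toSpanSingleton_apply, zsmul_eq_mul, mul_one]
  -- the generator of the range of F
  set d : ℤ := Submodule.IsPrincipal.generator (LinearMap.range F) with hddef
  obtain ⟨t0, ht0⟩ : d ∈ LinearMap.range F := Submodule.IsPrincipal.generator_mem _
  have hdvd : ∀ t, d ∣ F t := fun t =>
    (Submodule.IsPrincipal.mem_iff_generator_dvd (LinearMap.range F : Ideal ℤ)).mp ⟨t, rfl⟩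
  have hd0 : d ≠ 0 := by
    intro h
    obtain ⟨t1, ht1⟩ := hf 1
    have hF0 : F t1 = 0 := by
      have := hdvd t1; rw [h] at this; exact zero_dvd_iff.mp this
    have : (1 : ZMod n) = 0 := by
      rw [← ht1, hfF t1, hF0]; simp
    exact one_ne_zero this
  -- the "divided" functional F₁, surjective onto ℤ
  obtain ⟨F₁, hF₁b⟩ : ∃ F₁ : T →ₗ[ℤ] ℤ, ∀ i, F₁ (bT i) = F (bT i) / d :=
    ⟨bT.constr ℤ _, fun i => bT.constr_basis ℤ _ i⟩
  have hF₁ : ∀ t, F t = d * F₁ t := by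
    have hFe : F = d • F₁ := by
      apply bT.ext
      intro i
      rw [LinearMap.smul_apply, hF₁b i, smul_eq_mul, Int.mul_ediv_cancel' (hdvd _)]
    intro t
    rw [hFe, LinearMap.smul_apply, smul_eq_mul]
  have hF₁t0 : F₁ t0 = 1 := by
    have h := hF₁ t0
    rw [ht0] at h
    exact (mul_left_cancel₀ hd0 (by rw [mul_one, ← h])).symm
  -- a nonzero element of the kernel of F
  have hker : LinearMap.ker F ≠ ⊥ := by
    intro h
    have hinj : Function.Injective F := LinearMap.ker_eq_bot.mp h
    have hle := LinearMap.finrank_le_finrank_of_injective hinj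
    rw [Module.finrank_self] at hle
    omega
  obtain ⟨w', hw'mem, hw'0⟩ := (Submodule.ne_bot_iff _).mp hker
  have hFw' : F w' = 0 := hw'mem
  -- the ideal of values of linear functionals at w'
  set ev : (T →ₗ[ℤ] ℤ) →ₗ[ℤ] ℤ := LinearMap.applyₗ w' with hevdef
  set g : ℤ := Submodule.IsPrincipal.generator (LinearMap.range ev) with hgdef
  obtain ⟨H₀, hH₀⟩ : g ∈ LinearMap.range ev := Submodule.IsPrincipal.generator_mem _
  have hH₀w' : H₀ w' = g := hH₀
  have hgdvd : ∀ H : T →ₗ[ℤ] ℤ, g ∣ H w' := fun H =>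
    (Submodule.IsPrincipal.mem_iff_generator_dvd (LinearMap.range ev : Ideal ℤ)).mp ⟨H, rfl⟩
  have hg0 : g ≠ 0 := by
    intro h
    apply hw'0
    have hrepr : ∀ i, bT.repr w' i = 0 := by
      intro i
      have hco := hgdvd (bT.coord i)
      rw [h] at hco
      simpa [Module.Basis.coord_apply] using zero_dvd_iff.mp hco
    have h1 : bT.repr w' = 0 := Finsupp.ext hrepr
    have h2 := congrArg bT.repr.symm h1
    simpa using h2
  -- the primitive vector w with w' = g • w
  obtain ⟨w, hgw⟩ : ∃ w : T, g • w = w' := by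
    refine ⟨Finset.univ.sum fun i => ((bT.repr w' i) / g) • bT i, ?_⟩
    rw [Finset.smul_sum]
    have heach : ∀ i ∈ Finset.univ, g • ((bT.repr w' i) / g) • bT i = (bT.repr w' i) • bT i := by
      intro i _
      rw [smul_smul, Int.mul_ediv_cancel'
        (by simpa [Module.Basis.coord_apply] using hgdvd (bT.coord i))]
    rw [Finset.sum_congr rfl heach]
    exact bT.sum_repr w'
  have hH₀w : H₀ w = 1 := by
    have h1 : H₀ (g • w) = g := by rw [hgw, hH₀w']
    rw [map_smul, smul_eq_mul] at h1
    exact mul_left_cancel₀ hg0 (h1.trans (mul_one g).symm)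
  have hF₁w' : F₁ w' = 0 := by
    have h1 : d * F₁ w' = 0 := by rw [← hF₁, hFw']
    rcases mul_eq_zero.mp h1 with h | h
    · exact absurd h hd0
    · exact h
  have hF₁w : F₁ w = 0 := by
    have h1 : g * F₁ w = 0 := by
      rw [← smul_eq_mul, ← map_smul, hgw, hF₁w']
    rcases mul_eq_zero.mp h1 with h | h
    · exact absurd h hg0
    · exact h
  -- the functional G with G t0 = 0, G w = 1
  set G : T →ₗ[ℤ] ℤ := H₀ - (H₀ t0) • F₁ with hGdef
  have hGt0 : G t0 = 0 := by
    rw [hGdef]; simp [hF₁t0]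
  have hGw : G w = 1 := by
    rw [hGdef]; simp [hF₁w, hH₀w]
  -- apply the 2×2 Bezout construction
  have hdet : ((ψ 1).val : ℤ) * a - (n : ℤ) * (-b) = 1 := by linear_combination hab
  obtain ⟨τ, hτ⟩ := tame_aux F₁ G t0 w hF₁t0 hF₁w hGt0 hGw
    ((ψ 1).val : ℤ) (n : ℤ) (-b) a hdet
  refine ⟨τ, fun t => ?_⟩
  rw [hψmul (f t), hfF (τ t), hF₁ (τ t), hτ t, hfF t, hF₁ t]
  push_cast
  rw [ZMod.natCast_self, ZMod.natCast_zmod_val]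
  ring
end

section
/- Let T be a finitely generated free ℤ-module, let A be a finite abelian group, and let f, f′ : T → A be two surjective group homomorphisms. Then there exist an automorphism λ of T and an automorphism ψ of A such that f′ = ψ ∘ f ∘ λ. -/
set_option maxHeartbeats 1000000

open Finset

namespace SurjFin

variable {n : ℕ}

/-- The diagonal lattice in `Fin n → ℤ` with diagonal entries `d`. -/
def Ld (d : Fin n → ℕ) : Submodule ℤ (Fin n → ℤ) :=
  Submodule.pi Set.univ fun i => Ideal.span {(d i : ℤ)}

lemma mem_Ld {d : Fin n → ℕ} {x : Fin n → ℤ} : x ∈ Ld d ↔ ∀ i, (d i : ℤ) ∣ x i := by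
  simp [Ld, Submodule.mem_pi, Ideal.mem_span_singleton]

/-- Two diagonals are related if some automorphism of `ℤ^n` carries one lattice to other. -/
def Rel (d e : Fin n → ℕ) : Prop :=
  ∃ g : (Fin n → ℤ) ≃ₗ[ℤ] (Fin n → ℤ), (Ld d).map (g : (Fin n → ℤ) →ₗ[ℤ] (Fin n → ℤ)) = Ld e

lemma Rel.refl (d : Fin n → ℕ) : Rel d d :=
  ⟨LinearEquiv.refl ℤ _, by simp⟩

lemma Rel.symm {d e : Fin n → ℕ} (h : Rel d e) : Rel e d := by
  obtain ⟨g, hg⟩ := h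
  exact ⟨g.symm, by rw [← hg, ← Submodule.map_comp]; simp⟩

lemma Rel.trans {d e c : Fin n → ℕ} (h : Rel d e) (h' : Rel e c) : Rel d c := by
  obtain ⟨g, hg⟩ := h
  obtain ⟨g', hg'⟩ := h'
  exact ⟨g.trans g', by rw [← hg', ← hg, ← Submodule.map_comp]; rfl⟩

/-- An elementary `2×2` linear map acting on coordinates `i ≠ j`. -/
def twoMap (i j : Fin n) (p q r s : ℤ) : (Fin n → ℤ) →ₗ[ℤ] (Fin n → ℤ) where
  toFun x := fun k => if k = i then p * x i + q * x j else if k = j then r * x i + s * x j else x k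
  map_add' x y := by
    funext k
    simp only [Pi.add_apply]
    split_ifs <;> ring
  map_smul' c x := by
    funext k
    simp only [Pi.smul_apply, RingHom.id_apply, smul_eq_mul]
    split_ifs <;> ring

lemma twoMap_apply_i {i j : Fin n} (hij : i ≠ j) (p q r s : ℤ) (x : Fin n → ℤ) :
    twoMap i j p q r s x i = p * x i + q * x j := by simp [twoMap]

lemma twoMap_apply_j {i j : Fin n} (hij : i ≠ j) (p q r s : ℤ) (x : Fin n → ℤ) :
    twoMap i j p q r s x j = r * x i + s * x j := by simp [twoMap, hij.symm]

lemma twoMap_apply_other {i j k : Fin n} (hki : k ≠ i) (hkj : k ≠ j) (p q r s : ℤ)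
    (x : Fin n → ℤ) : twoMap i j p q r s x k = x k := by simp [twoMap, hki, hkj]

lemma twoMap_inv {i j : Fin n} (hij : i ≠ j) (p q r s : ℤ) (hdet : p * s - q * r = 1)
    (x : Fin n → ℤ) : twoMap i j s (-q) (-r) p (twoMap i j p q r s x) = x := by
  funext k
  by_cases h : k = i
  · subst h
    rw [twoMap_apply_i hij, twoMap_apply_i hij, twoMap_apply_j hij]
    linear_combination x k * hdet
  · by_cases h' : k = j
    · subst h'
      rw [twoMap_apply_j hij, twoMap_apply_i hij, twoMap_apply_j hij]
      linear_combination x k * hdet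
    · rw [twoMap_apply_other h h', twoMap_apply_other h h']

/-- The elementary `2×2` equivalence built from a matrix `[[p,q],[r,s]]` of determinant 1. -/
def twoEquiv {i j : Fin n} (hij : i ≠ j) (p q r s : ℤ) (hdet : p * s - q * r = 1) :
    (Fin n → ℤ) ≃ₗ[ℤ] (Fin n → ℤ) :=
  LinearEquiv.ofLinear (twoMap i j p q r s) (twoMap i j s (-q) (-r) p)
    (LinearMap.ext fun x => by
      have := twoMap_inv hij s (-q) (-r) p (by linarith) x
      simpa using this)
    (LinearMap.ext fun x => by simpa using twoMap_inv hij p q r s hdet x)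

lemma twoEquiv_apply {i j : Fin n} (hij : i ≠ j) (p q r s : ℤ) (hdet : p * s - q * r = 1)
    (x : Fin n → ℤ) : twoEquiv hij p q r s hdet x = twoMap i j p q r s x := rfl


lemma rel_move (d : Fin n → ℕ) {i j : Fin n} (hij : i ≠ j) (hi : d i ≠ 0) (hj : d j ≠ 0) :
    Rel d (Function.update (Function.update d i (Nat.gcd (d i) (d j))) j
      (Nat.lcm (d i) (d j))) := by
  set e : Fin n → ℕ := Function.update (Function.update d i (Nat.gcd (d i) (d j))) j
      (Nat.lcm (d i) (d j)) with he
  set A := d i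
  set B := d j
  set G := Nat.gcd A B with hGdef
  set L := Nat.lcm A B with hLdef
  have hei : e i = G := by
    rw [he, Function.update_of_ne hij, Function.update_self]
  have hej : e j = L := by rw [he, Function.update_self]
  have hek : ∀ k, k ≠ i → k ≠ j → e k = d k := fun k hki hkj => by
    rw [he, Function.update_of_ne hkj, Function.update_of_ne hki]
  have hGpos : G ≠ 0 := fun h => hi (Nat.eq_zero_of_gcd_eq_zero_left h)
  set a0 := A / G
  set b0 := B / G
  have hA : (A : ℤ) = (G : ℤ) * (a0 : ℤ) := by
    rw [← Nat.cast_mul, Nat.mul_div_cancel' (Nat.gcd_dvd_left A B)]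
  have hB : (B : ℤ) = (G : ℤ) * (b0 : ℤ) := by
    rw [← Nat.cast_mul, Nat.mul_div_cancel' (Nat.gcd_dvd_right A B)]
  have hL : (L : ℤ) = (G : ℤ) * (a0 : ℤ) * (b0 : ℤ) := by
    have h1 : (G : ℤ) * (L : ℤ) = (A : ℤ) * (B : ℤ) := by
      rw [← Nat.cast_mul, ← Nat.cast_mul, Nat.gcd_mul_lcm]
    apply mul_left_cancel₀ (show (G:ℤ) ≠ 0 by exact_mod_cast hGpos)
    rw [h1, hA, hB]; ring
  set u := Nat.gcdA A B
  set v := Nat.gcdB A B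
  have hbez : (G : ℤ) = (A : ℤ) * u + (B : ℤ) * v := Nat.gcd_eq_gcd_ab A B
  have hdet' : (a0 : ℤ) * u + (b0 : ℤ) * v = 1 := by
    apply mul_left_cancel₀ (show (G:ℤ) ≠ 0 by exact_mod_cast hGpos)
    rw [mul_one]
    calc (G:ℤ) * ((a0:ℤ) * u + (b0:ℤ) * v) = (A:ℤ) * u + (B:ℤ) * v := by rw [hA, hB]; ring
    _ = G := hbez.symm
  have hdet : u * (a0 : ℤ) - v * (-(b0 : ℤ)) = 1 := by linarith
  refine ⟨twoEquiv hij u v (-(b0:ℤ)) (a0:ℤ) hdet, ?_⟩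
  ext z
  simp only [Submodule.mem_map, LinearEquiv.coe_coe, twoEquiv_apply]
  constructor
  · rintro ⟨x, hx, rfl⟩
    rw [mem_Ld] at hx ⊢
    intro k
    by_cases hki : k = i
    · subst hki
      rw [twoMap_apply_i hij, hei]
      obtain ⟨c, hc⟩ := hx k
      obtain ⟨c', hc'⟩ := hx j
      exact ⟨a0 * c * u + b0 * c' * v, by rw [hc, hc', hA, hB]; ring⟩
    · by_cases hkj : k = j
      · subst hkj
        rw [twoMap_apply_j hij, hej]
        obtain ⟨c, hc⟩ := hx i
        obtain ⟨c', hc'⟩ := hx k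
        exact ⟨c' - c, by rw [hc, hc', hA, hB, hL]; ring⟩
      · rw [twoMap_apply_other hki hkj, hek k hki hkj]
        exact hx k
  · intro hz
    rw [mem_Ld] at hz
    refine ⟨twoMap i j (a0:ℤ) (-v) (b0:ℤ) u z, ?_, ?_⟩
    · rw [mem_Ld]
      intro k
      by_cases hki : k = i
      · subst hki
        rw [twoMap_apply_i hij]
        obtain ⟨c, hc⟩ := hz k
        obtain ⟨c', hc'⟩ := hz j
        rw [hei] at hc
        rw [hej] at hc'
        exact ⟨c - v * b0 * c', by rw [hc, hc', hA, hL]; ring⟩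
      · by_cases hkj : k = j
        · subst hkj
          rw [twoMap_apply_j hij]
          obtain ⟨c, hc⟩ := hz i
          obtain ⟨c', hc'⟩ := hz k
          rw [hei] at hc
          rw [hej] at hc'
          exact ⟨c + u * a0 * c', by rw [hc, hc', hB, hL]; ring⟩
        · rw [twoMap_apply_other hki hkj, ← hek k hki hkj]
          exact hz k
    · have := twoMap_inv hij (a0:ℤ) (-v) (b0:ℤ) u (by linarith) z
      simpa using this


open ArithmeticFunction ArithmeticFunction.Omega in
/-- Strictly fewer prime factors for a strict divisor. -/
lemma omega_lt_of_dvd {a b : ℕ} (hb : b ≠ 0) (hab : a ∣ b) (hne : a ≠ b) : Ω a < Ω b := by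
  obtain ⟨c, rfl⟩ := hab
  have ha : a ≠ 0 := fun h => hb (by simp [h])
  have hc : c ≠ 0 := fun h => hb (by simp [h])
  have hc1 : c ≠ 1 := fun h => hne (by simp [h])
  have : Ω c ≠ 0 := by
    rw [cardFactors_apply]
    simp only [ne_eq, List.length_eq_zero_iff]
    rw [Nat.primeFactorsList_eq_nil]
    tauto
  rw [cardFactors_mul ha hc]
  omega

open ArithmeticFunction ArithmeticFunction.Omega in
/-- The weighted measure used to show termination of the gcd/lcm normalization. -/
def Wt (d : Fin n → ℕ) : ℕ := ∑ k : Fin n, (n - (k : ℕ)) * Ω (d k)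

open ArithmeticFunction ArithmeticFunction.Omega in
lemma wt_lt (d : Fin n → ℕ) {i j : Fin n} (hij : i < j) (hi : d i ≠ 0) (hj : d j ≠ 0)
    (hnd : ¬ d i ∣ d j) :
    Wt (Function.update (Function.update d i (Nat.gcd (d i) (d j))) j (Nat.lcm (d i) (d j)))
      < Wt d := by
  set e : Fin n → ℕ := Function.update (Function.update d i (Nat.gcd (d i) (d j))) j
      (Nat.lcm (d i) (d j)) with he
  have hijne : i ≠ j := hij.ne
  have hei : e i = Nat.gcd (d i) (d j) := by
    rw [he, Function.update_of_ne hijne, Function.update_self]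
  have hej : e j = Nat.lcm (d i) (d j) := by rw [he, Function.update_self]
  have hek : ∀ k, k ≠ i → k ≠ j → e k = d k := fun k hki hkj => by
    rw [he, Function.update_of_ne hkj, Function.update_of_ne hki]
  have hju : j ∈ (Finset.univ : Finset (Fin n)).erase i := by
    simp [hij.ne']
  have hsplit : ∀ f : Fin n → ℕ, ∑ k : Fin n, (n - (k:ℕ)) * Ω (f k) =
      (n - (i:ℕ)) * Ω (f i) + ((n - (j:ℕ)) * Ω (f j) +
        ∑ k ∈ (Finset.univ.erase i).erase j, (n - (k:ℕ)) * Ω (f k)) := by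
    intro f
    rw [← Finset.add_sum_erase _ _ (Finset.mem_univ i), ← Finset.add_sum_erase _ _ hju]
  have htail : ∑ k ∈ (Finset.univ.erase i).erase j, (n - (k:ℕ)) * Ω (e k) =
      ∑ k ∈ (Finset.univ.erase i).erase j, (n - (k:ℕ)) * Ω (d k) := by
    refine Finset.sum_congr rfl fun k hk => ?_
    simp only [Finset.mem_erase] at hk
    rw [hek k hk.2.1 hk.1]
  rw [Wt, Wt, hsplit e, hsplit d, htail, hei, hej]
  have hG0 : Nat.gcd (d i) (d j) ≠ 0 := fun h => hi (Nat.eq_zero_of_gcd_eq_zero_left h)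
  have hL0 : Nat.lcm (d i) (d j) ≠ 0 := Nat.lcm_ne_zero hi hj
  have hsum : Ω (Nat.gcd (d i) (d j)) + Ω (Nat.lcm (d i) (d j)) = Ω (d i) + Ω (d j) := by
    rw [← cardFactors_mul hG0 hL0, ← cardFactors_mul hi hj, Nat.gcd_mul_lcm]
  have hGlt : Ω (Nat.gcd (d i) (d j)) < Ω (d i) := by
    refine omega_lt_of_dvd hi (Nat.gcd_dvd_left _ _) fun h => hnd ?_
    rw [← h]
    exact Nat.gcd_dvd_right _ _
  have hw : (n - (j:ℕ)) < (n - (i:ℕ)) := by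
    have := j.isLt
    have := Fin.lt_iff_val_lt_val.mp hij
    omega
  have key : (n - (i:ℕ)) * Ω (Nat.gcd (d i) (d j)) + (n - (j:ℕ)) * Ω (Nat.lcm (d i) (d j))
      < (n - (i:ℕ)) * Ω (d i) + (n - (j:ℕ)) * Ω (d j) := by
    zify
    zify at hsum hGlt hw
    nlinarith [hsum, hGlt, hw]
  omega

lemma exists_chain (d : Fin n → ℕ) (hd : ∀ k, d k ≠ 0) :
    ∃ c : Fin n → ℕ, (∀ k, c k ≠ 0) ∧ (∀ i j : Fin n, i ≤ j → c i ∣ c j) ∧ Rel d c := by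
  generalize hN : Wt d = N
  induction N using Nat.strong_induction_on generalizing d with
  | _ N ih =>
  by_cases hchain : ∀ i j : Fin n, i < j → d i ∣ d j
  · refine ⟨d, hd, fun i j hij => ?_, Rel.refl d⟩
    rcases eq_or_lt_of_le hij with h | h
    · rw [h]
    · exact hchain i j h
  · push_neg at hchain
    obtain ⟨i, j, hij, hnd⟩ := hchain
    set e : Fin n → ℕ := Function.update (Function.update d i (Nat.gcd (d i) (d j))) j
        (Nat.lcm (d i) (d j)) with he
    have hepos : ∀ k, e k ≠ 0 := by
      intro k
      rw [he]
      by_cases hkj : k = j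
      · rw [hkj, Function.update_self]
        exact Nat.lcm_ne_zero (hd i) (hd j)
      · rw [Function.update_of_ne hkj]
        by_cases hki : k = i
        · rw [hki, Function.update_self]
          exact fun h => hd i (Nat.eq_zero_of_gcd_eq_zero_left h)
        · rw [Function.update_of_ne hki]
          exact hd k
    have hlt : Wt e < N := hN ▸ wt_lt d hij (hd i) (hd j) hnd
    obtain ⟨c, h1, h2, h3⟩ := ih (Wt e) hlt e hepos rfl
    exact ⟨c, h1, h2, (rel_move d hij.ne (hd i) (hd j)).trans h3⟩


/-- Two upward-closed decidable predicates on `Fin n` whose filters have equal cardinality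
agree. -/
lemma upward_closed_eq {P Q : Fin n → Prop} [DecidablePred P] [DecidablePred Q]
    (hP : ∀ i j : Fin n, i ≤ j → P i → P j) (hQ : ∀ i j : Fin n, i ≤ j → Q i → Q j)
    (hcard : (Finset.univ.filter P).card = (Finset.univ.filter Q).card) (i : Fin n) :
    P i ↔ Q i := by
  have key : ∀ (P' Q' : Fin n → Prop) (_ : DecidablePred P') (_ : DecidablePred Q'),
      (∀ i j : Fin n, i ≤ j → P' i → P' j) → (∀ i j : Fin n, i ≤ j → Q' i → Q' j) →
      (Finset.univ.filter P').card = (Finset.univ.filter Q').card →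
      ∀ i : Fin n, P' i → Q' i := by
    intro P' Q' _ _ hP' hQ' hc i hPi
    by_contra hQi
    have h1 : Finset.Ici i ⊆ Finset.univ.filter P' := by
      intro j hj
      rw [Finset.mem_Ici] at hj
      simp only [Finset.mem_filter, Finset.mem_univ, true_and]
      exact hP' i j hj hPi
    have h2 : Finset.univ.filter Q' ⊆ Finset.Ioi i := by
      intro j hj
      simp only [Finset.mem_filter, Finset.mem_univ, true_and] at hj
      rw [Finset.mem_Ioi]
      by_contra hji
      exact hQi (hQ' j i (le_of_not_gt hji) hj)
    have c1 := Finset.card_le_card h1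
    have c2 := Finset.card_le_card h2
    rw [Fin.card_Ici] at c1
    rw [Fin.card_Ioi] at c2
    have := i.isLt
    omega
  exact ⟨key P Q _ _ hP hQ hcard i, key Q P _ _ hQ hP hcard.symm i⟩

/-- Uniqueness of divisibility chains with the same gcd-counting data. -/
lemma chain_unique (d e : Fin n → ℕ) (hd : ∀ i, d i ≠ 0) (he : ∀ i, e i ≠ 0)
    (hcd : ∀ i j : Fin n, i ≤ j → d i ∣ d j) (hce : ∀ i j : Fin n, i ≤ j → e i ∣ e j)
    (hcnt : ∀ m : ℕ, ∏ i, Nat.gcd (d i) m = ∏ i, Nat.gcd (e i) m) : d = e := by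
  generalize hN : ∏ i, d i = N
  induction N using Nat.strong_induction_on generalizing d e with
  | _ N ih =>
  -- the products agree
  have hprod : ∏ i, d i = ∏ i, e i := by
    have h := hcnt ((∏ i, d i) * ∏ i, e i)
    have h1 : ∀ i, Nat.gcd (d i) ((∏ i, d i) * ∏ i, e i) = d i := fun i =>
      Nat.gcd_eq_left (Dvd.dvd.mul_right (Finset.dvd_prod_of_mem d (Finset.mem_univ i)) _)
    have h2 : ∀ i, Nat.gcd (e i) ((∏ i, d i) * ∏ i, e i) = e i := fun i =>
      Nat.gcd_eq_left (Dvd.dvd.mul_left (Finset.dvd_prod_of_mem e (Finset.mem_univ i)) _)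
    calc ∏ i, d i = ∏ i, Nat.gcd (d i) ((∏ i, d i) * ∏ i, e i) := by
          exact (Finset.prod_congr rfl fun i _ => (h1 i).symm)
      _ = ∏ i, Nat.gcd (e i) ((∏ i, d i) * ∏ i, e i) := h
      _ = ∏ i, e i := Finset.prod_congr rfl fun i _ => h2 i
  by_cases htriv : ∏ i, d i = 1
  · funext i
    have h1 : d i = 1 :=
      Nat.dvd_one.mp (htriv ▸ Finset.dvd_prod_of_mem d (Finset.mem_univ i))
    have he1 : ∏ i, e i = 1 := hprod ▸ htriv
    have h2 : e i = 1 :=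
      Nat.dvd_one.mp (he1 ▸ Finset.dvd_prod_of_mem e (Finset.mem_univ i))
    rw [h1, h2]
  · set p := (∏ i, d i).minFac with hp
    have hpp : p.Prime := Nat.minFac_prime htriv
    -- p-divisibility counts agree
    have hsd : ∀ (f : Fin n → ℕ), (∀ i, f i ≠ 0) →
        ∏ i, Nat.gcd (f i) p = p ^ (Finset.univ.filter (fun i => p ∣ f i)).card := by
      intro f hf
      rw [← Finset.prod_filter_mul_prod_filter_not Finset.univ (fun i => p ∣ f i)]
      have hl : ∀ i ∈ Finset.univ.filter (fun i => p ∣ f i), Nat.gcd (f i) p = p := by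
        intro i hi
        simp only [Finset.mem_filter] at hi
        exact Nat.gcd_eq_right hi.2
      have hr : ∀ i ∈ Finset.univ.filter (fun i => ¬ p ∣ f i), Nat.gcd (f i) p = 1 := by
        intro i hi
        simp only [Finset.mem_filter] at hi
        exact Nat.Coprime.gcd_eq_one (((Nat.Prime.coprime_iff_not_dvd hpp).mpr hi.2).symm)
      rw [Finset.prod_congr rfl hl, Finset.prod_congr rfl hr, Finset.prod_const,
        Finset.prod_const, one_pow, mul_one]
    have hs : (Finset.univ.filter (fun i => p ∣ d i)).card
        = (Finset.univ.filter (fun i => p ∣ e i)).card := by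
      have := hcnt p
      rw [hsd d hd, hsd e he] at this
      exact Nat.pow_right_injective hpp.two_le this
    -- the reduced sequences
    set d' : Fin n → ℕ := fun i => d i / Nat.gcd (d i) p with hd'
    set e' : Fin n → ℕ := fun i => e i / Nat.gcd (e i) p with he'
    have hmul : ∀ (f : Fin n → ℕ) (i : Fin n), Nat.gcd (f i) p * (f i / Nat.gcd (f i) p) = f i :=
      fun f i => Nat.mul_div_cancel' (Nat.gcd_dvd_left _ _)
    -- per-index gcd factorization
    have hkey : ∀ (f : Fin n → ℕ), (∀ i, f i ≠ 0) → ∀ (m : ℕ) (i : Fin n),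
        Nat.gcd (f i) (p * m) = Nat.gcd (f i) p * Nat.gcd (f i / Nat.gcd (f i) p) m := by
      intro f hf m i
      by_cases hpd : p ∣ f i
      · have h1 : Nat.gcd (f i) p = p := Nat.gcd_eq_right hpd
        rw [h1]
        conv_lhs => rw [← hmul f i]
        rw [h1, Nat.gcd_mul_left]
      · have h1 : Nat.gcd (f i) p = 1 :=
          Nat.Coprime.gcd_eq_one (((Nat.Prime.coprime_iff_not_dvd hpp).mpr hpd).symm)
        rw [h1, one_mul, Nat.div_one]
        exact Nat.Coprime.gcd_mul_left_cancel_right m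
          (((Nat.Prime.coprime_iff_not_dvd hpp).mpr hpd))
    have hd'pos : ∀ i, d' i ≠ 0 := fun i h =>
      hd i (by rw [← hmul d i, show d i / Nat.gcd (d i) p = 0 from h, mul_zero])
    have he'pos : ∀ i, e' i ≠ 0 := fun i h =>
      he i (by rw [← hmul e i, show e i / Nat.gcd (e i) p = 0 from h, mul_zero])
    have hcnt' : ∀ m, ∏ i, Nat.gcd (d' i) m = ∏ i, Nat.gcd (e' i) m := by
      intro m
      have h := hcnt (p * m)
      rw [Finset.prod_congr rfl (fun i _ => hkey d hd m i),
        Finset.prod_congr rfl (fun i _ => hkey e he m i), Finset.prod_mul_distrib,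
        Finset.prod_mul_distrib, hsd d hd, hsd e he, hs] at h
      exact Nat.eq_of_mul_eq_mul_left (pow_pos hpp.pos _) h
    -- the reduced sequences are chains
    have hchain' : ∀ (f : Fin n → ℕ), (∀ i, f i ≠ 0) → (∀ i j : Fin n, i ≤ j → f i ∣ f j) →
        ∀ i j : Fin n, i ≤ j →
          (f i / Nat.gcd (f i) p) ∣ (f j / Nat.gcd (f j) p) := by
      intro f hf hcf i j hij
      by_cases hpd : p ∣ f i
      · have hpj : p ∣ f j := dvd_trans hpd (hcf i j hij)
        rw [Nat.gcd_eq_right hpd, Nat.gcd_eq_right hpj]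
        obtain ⟨c, hc⟩ := hcf i j hij
        exact ⟨c, by rw [hc, mul_comm (f i) c, Nat.mul_div_assoc c hpd, mul_comm]⟩
      · rw [Nat.Coprime.gcd_eq_one (((Nat.Prime.coprime_iff_not_dvd hpp).mpr hpd).symm),
          Nat.div_one]
        by_cases hpj : p ∣ f j
        · rw [Nat.gcd_eq_right hpj]
          refine Nat.Coprime.dvd_of_dvd_mul_left
            ((Nat.Prime.coprime_iff_not_dvd hpp).mpr hpd).symm ?_
          rw [Nat.mul_div_cancel' hpj]
          exact hcf i j hij
        · rw [Nat.Coprime.gcd_eq_one (((Nat.Prime.coprime_iff_not_dvd hpp).mpr hpj).symm),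
            Nat.div_one]
          exact hcf i j hij
    -- the product strictly decreases
    have hsplit : ∏ i, d i = p ^ (Finset.univ.filter (fun i => p ∣ d i)).card * ∏ i, d' i := by
      conv_lhs => rw [Finset.prod_congr rfl (fun i _ => (hmul d i).symm)]
      rw [Finset.prod_mul_distrib, hsd d hd]
    have hcard1 : 1 ≤ (Finset.univ.filter (fun i => p ∣ d i)).card := by
      obtain ⟨i, -, hi⟩ := (Nat.Prime.prime hpp).exists_mem_finset_dvd (hN ▸ Nat.minFac_dvd N)
      exact Finset.card_pos.mpr ⟨i, Finset.mem_filter.mpr ⟨Finset.mem_univ i, hi⟩⟩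
    have hd'prodpos : 0 < ∏ i, d' i :=
      Nat.pos_of_ne_zero (Finset.prod_ne_zero_iff.mpr fun i _ => hd'pos i)
    have hlt : ∏ i, d' i < N := by
      rw [← hN, hsplit]
      have h2 : 2 ≤ p ^ (Finset.univ.filter (fun i => p ∣ d i)).card :=
        le_trans hpp.two_le (Nat.le_self_pow (by omega) p)
      calc ∏ i, d' i < 2 * ∏ i, d' i := by omega
        _ ≤ p ^ (Finset.univ.filter (fun i => p ∣ d i)).card * ∏ i, d' i :=
            Nat.mul_le_mul_right _ h2
    have hde' : d' = e' := ih (∏ i, d' i) hlt d' e' hd'pos he'pos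
      (hchain' d hd hcd) (hchain' e he hce) hcnt' rfl
    -- conclude
    funext i
    have hiff : p ∣ d i ↔ p ∣ e i :=
      upward_closed_eq (fun i j hij h => dvd_trans h (hcd i j hij))
        (fun i j hij h => dvd_trans h (hce i j hij)) hs i
    have hg : Nat.gcd (d i) p = Nat.gcd (e i) p := by
      by_cases hpd : p ∣ d i
      · rw [Nat.gcd_eq_right hpd, Nat.gcd_eq_right (hiff.mp hpd)]
      · rw [Nat.Coprime.gcd_eq_one (((Nat.Prime.coprime_iff_not_dvd hpp).mpr hpd).symm),
          Nat.Coprime.gcd_eq_one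
            (((Nat.Prime.coprime_iff_not_dvd hpp).mpr (fun h => hpd (hiff.mpr h))).symm)]
    calc d i = Nat.gcd (d i) p * d' i := (hmul d i).symm
      _ = Nat.gcd (e i) p * e' i := by rw [hg, hde']
      _ = e i := hmul e i



/-- Number of `m`-torsion points of `ZMod k` is `gcd k m`. -/
lemma zmod_tcount (k m : ℕ) (hk : k ≠ 0) :
    Nat.card {x : ZMod k // m • x = 0} = Nat.gcd k m := by
  haveI : NeZero k := ⟨hk⟩
  set μ : ZMod k →+ ZMod k := AddMonoidHom.mk' (fun x => m • x) (fun a b => smul_add m a b) with hμ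
  have h0 : Nat.card {x : ZMod k // m • x = 0} = Nat.card μ.ker :=
    Nat.card_congr (Equiv.subtypeEquivRight fun x => by simp [hμ, AddMonoidHom.mem_ker])
  have hrange : μ.range = AddSubgroup.zmultiples ((m : ZMod k)) := by
    ext y
    simp only [AddMonoidHom.mem_range, AddSubgroup.mem_zmultiples_iff]
    constructor
    · rintro ⟨x, rfl⟩
      refine ⟨(x.val : ℤ), ?_⟩
      show ((x.val : ℤ)) • ((m : ℕ) : ZMod k) = μ x
      rw [natCast_zsmul, hμ]
      show x.val • ((m : ℕ) : ZMod k) = m • x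
      rw [nsmul_eq_mul, nsmul_eq_mul, ZMod.natCast_val, ZMod.cast_id, mul_comm]
    · rintro ⟨z, rfl⟩
      refine ⟨z • (1 : ZMod k), ?_⟩
      show m • (z • (1 : ZMod k)) = z • ((m : ℕ) : ZMod k)
      rw [smul_comm, nsmul_eq_mul, mul_one]
  have hordm : Nat.card μ.range = k / Nat.gcd k m := by
    rw [hrange, Nat.card_zmultiples, ZMod.addOrderOf_coe m hk]
  have hcardq : Nat.card (ZMod k ⧸ μ.ker) = k / Nat.gcd k m := by
    rw [Nat.card_congr (QuotientAddGroup.quotientKerEquivRange μ).toEquiv, hordm]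
  have htot : k = (k / Nat.gcd k m) * Nat.card μ.ker := by
    have := AddSubgroup.card_eq_card_quotient_mul_card_addSubgroup (s := μ.ker)
    rw [Nat.card_zmod, hcardq] at this
    exact this
  have hgdvd : Nat.gcd k m ∣ k := Nat.gcd_dvd_left k m
  have hgpos : 0 < Nat.gcd k m := Nat.gcd_pos_of_pos_left m (Nat.pos_of_ne_zero hk)
  have hkg : 0 < k / Nat.gcd k m := Nat.div_pos (Nat.le_of_dvd (Nat.pos_of_ne_zero hk) hgdvd)
    hgpos
  rw [h0]
  have : Nat.card μ.ker = k / (k / Nat.gcd k m) :=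
    (Nat.div_eq_of_eq_mul_right hkg htot).symm
  rw [this, Nat.div_div_self hgdvd hk]

/-- `m`-torsion count in a finite product of `ZMod`s. -/
lemma pi_tcount (d : Fin n → ℕ) (hd : ∀ i, d i ≠ 0) (m : ℕ) :
    Nat.card {x : (∀ i, ZMod (d i)) // m • x = 0} = ∏ i, Nat.gcd (d i) m := by
  have h1 : Nat.card {x : (∀ i, ZMod (d i)) // m • x = 0}
      = Nat.card (∀ i, {y : ZMod (d i) // m • y = 0}) := by
    refine Nat.card_congr ((Equiv.subtypeEquivRight fun x => ?_).trans
      (Equiv.subtypePiEquivPi (p := fun i (y : ZMod (d i)) => m • y = 0)))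
    constructor
    · intro h i
      exact congrFun h i
    · intro h
      funext i
      exact h i
  rw [h1, Nat.card_pi]
  exact Finset.prod_congr rfl fun i _ => zmod_tcount (d i) m (hd i)

/-- Isomorphic products of `ZMod`s have the same gcd-counting data. -/
lemma prod_gcd_eq_of_equiv {d e : Fin n → ℕ} (hd : ∀ i, d i ≠ 0) (he : ∀ i, e i ≠ 0)
    (φ : (∀ i, ZMod (d i)) ≃+ (∀ i, ZMod (e i))) (m : ℕ) :
    ∏ i, Nat.gcd (d i) m = ∏ i, Nat.gcd (e i) m := by
  rw [← pi_tcount d hd m, ← pi_tcount e he m]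
  refine Nat.card_congr (Equiv.subtypeEquiv φ.toEquiv fun x => ?_)
  show m • x = 0 ↔ m • φ x = 0
  rw [← map_nsmul]
  exact (map_eq_zero_iff φ φ.injective).symm


lemma span_range_single (a : Fin n → ℤ) :
    Submodule.span ℤ (Set.range fun i => Pi.single i (a i)) = Ld (fun i => (a i).natAbs) := by
  apply le_antisymm
  · rw [Submodule.span_le]
    rintro _ ⟨i, rfl⟩
    rw [SetLike.mem_coe, mem_Ld]
    intro k
    simp only [Pi.single_apply]
    split_ifs with h
    · subst h
      exact Int.natAbs_dvd.mpr dvd_rfl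
    · exact dvd_zero _
  · intro x hx
    rw [mem_Ld] at hx
    have hx' : ∀ i, a i ∣ x i := fun i => Int.natAbs_dvd.mp (hx i)
    choose c hc using hx'
    have hxe : x = ∑ i, c i • Pi.single i (a i) := by
      funext k
      rw [Finset.sum_apply]
      simp only [Pi.smul_apply, Pi.single_apply, smul_eq_mul, mul_ite, mul_zero]
      rw [Finset.sum_ite_eq Finset.univ k]
      simp only [Finset.mem_univ, if_true]
      rw [hc k, mul_comm]
    rw [hxe]
    exact Submodule.sum_mem _ fun i _ =>
      Submodule.smul_mem _ _ (Submodule.subset_span ⟨i, rfl⟩)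

/-- The quotient by a diagonal lattice is the product of the `ZMod`s. -/
noncomputable def quotLdEquiv (d : Fin n → ℕ) :
    ((Fin n → ℤ) ⧸ Ld d) ≃+ ∀ i, ZMod (d i) :=
  (Submodule.quotientPi (fun i => Ideal.span {((d i : ℕ) : ℤ)})).toAddEquiv.trans
    (AddEquiv.piCongrRight fun i => (Int.quotientSpanNatEquivZMod (d i)).toAddEquiv)

section Transport

variable {T : Type*} [AddCommGroup T] [Module.Free ℤ T] [Module.Finite ℤ T]
variable {A : Type*} [AddCommGroup A] [Finite A]

/-- Smith normal form: the kernel of a surjection onto a finite abelian group is carried to a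
diagonal lattice by some coordinate system. -/
lemma smith_transport (f : T →+ A) (hf : Function.Surjective f) :
    ∃ (e : T ≃ₗ[ℤ] (Fin (Fintype.card (Module.Free.ChooseBasisIndex ℤ T)) → ℤ))
      (d : Fin (Fintype.card (Module.Free.ChooseBasisIndex ℤ T)) → ℕ),
      (∀ i, d i ≠ 0) ∧
      (LinearMap.ker f.toIntLinearMap).map
        (e : T →ₗ[ℤ] (Fin (Fintype.card (Module.Free.ChooseBasisIndex ℤ T)) → ℤ)) = Ld d := by
  classical
  set ι := Module.Free.ChooseBasisIndex ℤ T with hι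
  set b : Module.Basis ι ℤ T := Module.Free.chooseBasis ℤ T with hb
  set K : Submodule ℤ T := LinearMap.ker f.toIntLinearMap with hK
  obtain ⟨nn, snf⟩ := K.smithNormalForm b
  have hsurj : Function.Surjective f.toIntLinearMap := hf
  haveI hfin : Finite (T ⧸ K) :=
    Finite.of_equiv A (LinearMap.quotKerEquivOfSurjective f.toIntLinearMap hsurj).symm.toEquiv
  haveI hfin' : Finite (T ⧸ K.toAddSubgroup) := hfin
  have hidx : K.toAddSubgroup.index ≠ 0 := AddSubgroup.index_ne_zero_of_finite
  have hn : nn = Fintype.card ι := snf.toAddSubgroup_index_ne_zero_iff.mp hidx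
  subst hn
  have hbij : Function.Bijective snf.f :=
    (Fintype.bijective_iff_injective_and_card snf.f).mpr ⟨snf.f.injective, by simp⟩
  set E : Fin (Fintype.card ι) ≃ ι := Equiv.ofBijective snf.f hbij with hE
  set c : Module.Basis (Fin (Fintype.card ι)) ℤ T := snf.bM.reindex E.symm with hcb
  have hc : ∀ i, c i = snf.bM (snf.f i) := fun i => by
    rw [hcb, Module.Basis.reindex_apply, Equiv.symm_symm]
    rfl
  have ha : ∀ i, snf.a i ≠ 0 := by
    intro i hai
    apply Module.Basis.ne_zero snf.bN i
    have h := snf.snf i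
    rw [hai, zero_smul] at h
    exact Subtype.ext h
  have hKspan : K = Submodule.span ℤ (Set.range fun i => snf.a i • c i) := by
    conv_lhs => rw [← Submodule.map_subtype_top K]
    rw [← snf.bN.span_eq, Submodule.map_span, ← Set.range_comp]
    refine congrArg _ (congrArg Set.range ?_)
    funext i
    show (snf.bN i : T) = snf.a i • c i
    rw [snf.snf i, hc i]
  refine ⟨c.equivFun, fun i => (snf.a i).natAbs, fun i => Int.natAbs_ne_zero.mpr (ha i), ?_⟩
  simp only [hKspan]
  rw [Submodule.map_span, ← Set.range_comp]
  have himg : ((c.equivFun : T →ₗ[ℤ] (Fin (Fintype.card ι) → ℤ)) ∘ fun i => snf.a i • c i)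
      = fun i => Pi.single i (snf.a i) := by
    funext i
    show c.equivFun (snf.a i • c i) = Pi.single i (snf.a i)
    rw [map_smul]
    have h1 : c.equivFun (c i) = Pi.single i 1 := by
      funext j
      rw [Module.Basis.equivFun_self, Pi.single_apply]
      simp [eq_comm]
    rw [h1, ← Pi.single_smul, smul_eq_mul, mul_one]
  rw [himg]
  exact span_range_single snf.a

end Transport

end SurjFin

open SurjFin

/-- Let `T` be a finitely generated free ℤ-module, `A` a finite abelian
group and `f, f' : T → A` two surjective group homomorphisms. Then there are an
automorphism `λ` of `T` and an automorphism `ψ` of `A` with `f' = ψ ∘ f ∘ λ`. -/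
theorem surjections_onto_finite_abelian_equivalent
    {T : Type*} [AddCommGroup T] [Module ℤ T] [Module.Free ℤ T] [Module.Finite ℤ T]
    {A : Type*} [AddCommGroup A] [Finite A]
    (f f' : T →+ A) (hf : Function.Surjective f) (hf' : Function.Surjective f') :
    ∃ (l : T ≃ₗ[ℤ] T) (ψ : A ≃+ A), ∀ t : T, f' t = ψ (f (l t)) := by
  classical
  -- replace the given `ℤ`-module structure by the canonical one (they are equal)
  rename_i iT iM iF iMF iA iFA
  haveI : Subsingleton (Module ℤ T) := (AddCommGroup.uniqueIntModule (M := T)).instSubsingleton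
  have hMod : iM = AddCommGroup.toIntModule T := Subsingleton.elim _ _
  subst hMod
  -- Smith normal form for both surjections
  obtain ⟨e₁, d₁, hd₁, hm₁⟩ := smith_transport f hf
  obtain ⟨e₂, d₂, hd₂, hm₂⟩ := smith_transport f' hf'
  -- normalize both diagonals to divisibility chains
  obtain ⟨c₁, hc₁pos, hc₁chain, hrel₁⟩ := exists_chain d₁ hd₁
  obtain ⟨c₂, hc₂pos, hc₂chain, hrel₂⟩ := exists_chain d₂ hd₂
  obtain ⟨g₁, hg₁⟩ := hrel₁
  obtain ⟨g₂, hg₂⟩ := hrel₂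
  -- identifications of `A` with the products of cyclic groups
  have hsurj₁ : Function.Surjective f.toIntLinearMap := hf
  have hsurj₂ : Function.Surjective f'.toIntLinearMap := hf'
  let φ₁ : A ≃+ ∀ i, ZMod (c₁ i) :=
    ((LinearMap.quotKerEquivOfSurjective f.toIntLinearMap hsurj₁).symm.trans
      ((Submodule.Quotient.equiv _ _ e₁ hm₁).trans
        (Submodule.Quotient.equiv _ _ g₁ hg₁))).toAddEquiv.trans (quotLdEquiv c₁)
  let φ₂ : A ≃+ ∀ i, ZMod (c₂ i) :=
    ((LinearMap.quotKerEquivOfSurjective f'.toIntLinearMap hsurj₂).symm.trans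
      ((Submodule.Quotient.equiv _ _ e₂ hm₂).trans
        (Submodule.Quotient.equiv _ _ g₂ hg₂))).toAddEquiv.trans (quotLdEquiv c₂)
  -- the chains coincide
  have hc : c₁ = c₂ := chain_unique c₁ c₂ hc₁pos hc₂pos hc₁chain hc₂chain
    (prod_gcd_eq_of_equiv hc₁pos hc₂pos (φ₁.symm.trans φ₂))
  subst hc
  -- an automorphism of the standard lattice carrying `Ld d₂` to `Ld d₁`
  obtain ⟨h, hh⟩ : Rel d₂ d₁ := Rel.trans ⟨g₂, hg₂⟩ (Rel.symm ⟨g₁, hg₁⟩)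
  -- the resulting automorphism of `T`
  set l : T ≃ₗ[ℤ] T := e₂.trans (h.trans e₁.symm) with hldef
  have hl : Submodule.map (l : T →ₗ[ℤ] T) (LinearMap.ker f'.toIntLinearMap)
      = LinearMap.ker f.toIntLinearMap := by
    set V := Fin (Fintype.card (Module.Free.ChooseBasisIndex ℤ T)) → ℤ with hV
    have h1 : (l : T →ₗ[ℤ] T)
        = ((e₁.symm : V →ₗ[ℤ] T).comp (h : V →ₗ[ℤ] V)).comp (e₂ : T →ₗ[ℤ] V) := by
      rfl
    rw [h1, Submodule.map_comp, Submodule.map_comp, hm₂, hh, ← hm₁, ← Submodule.map_comp]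
    simp
  have hmem : ∀ t : T, f' t = 0 ↔ f (l t) = 0 := by
    intro t
    have : l t ∈ LinearMap.ker f.toIntLinearMap ↔ t ∈ LinearMap.ker f'.toIntLinearMap := by
      rw [← hl, Submodule.mem_map_equiv]
      simp
    exact this.symm
  -- transport along the two quotient descriptions of `A`
  set s : T →ₗ[ℤ] A := f.toIntLinearMap.comp (l : T →ₗ[ℤ] T) with hsdef
  have hss : Function.Surjective s := hf.comp l.surjective
  have hker : LinearMap.ker s = LinearMap.ker f'.toIntLinearMap := by
    ext t
    simp only [LinearMap.mem_ker, hsdef, LinearMap.comp_apply]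
    exact ((hmem t).symm : _)
  set E1 : (T ⧸ LinearMap.ker s) ≃ₗ[ℤ] A := LinearMap.quotKerEquivOfSurjective s hss with hE1
  set E2 : (T ⧸ LinearMap.ker f'.toIntLinearMap) ≃ₗ[ℤ] A :=
    LinearMap.quotKerEquivOfSurjective f'.toIntLinearMap hsurj₂ with hE2
  refine ⟨l, (E1.symm.trans ((Submodule.quotEquivOfEq _ _ hker).trans E2)).toAddEquiv,
    fun t => ?_⟩
  have h1 : E1 (Submodule.Quotient.mk t) = f (l t) := rfl
  have h2 : E2 (Submodule.Quotient.mk t) = f' t := rfl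
  show f' t = (E1.symm.trans ((Submodule.quotEquivOfEq _ _ hker).trans E2)) (f (l t))
  rw [LinearEquiv.trans_apply, ← h1, LinearEquiv.symm_apply_apply, LinearEquiv.trans_apply,
    Submodule.quotEquivOfEq_mk, h2]
end

section
/- Let X and T be finitely generated free ℤ-modules, let K ⊆ X be a submodule such that A := X/K is finite, let h : X → A be the canonical projection, and let f : T → A be a surjective homomorphism. Let ψ₁, ψ₂, ψ, ζ be automorphisms of A with ψ₁ = ζ ∘ ψ₂ ∘ ψ, and suppose there exist automorphisms ζ̃ of X and ψ̃ of T with ζ ∘ h = h ∘ ζ̃ and ψ ∘ f = f ∘ ψ̃. Then the map (x, t) ↦ (ζ̃⁻¹(x), ψ̃(t)) defines a ℤ-module isomorphism from the fibre product {(x, t) ∈ X ⊕ T : h(x) = ψ₁(f(t))} onto the fibre product {(x, t) ∈ X ⊕ T : h(x) = ψ₂(f(t))}. -/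
/-- Let `X`, `T` be f.g. free ℤ-modules, `K ⊆ X` a submodule of finite
index with projection `h : X → A := X/K`, and `f : T → A` surjective. Let `ψ₁, ψ₂, ψ, ζ`
be automorphisms of `A` with `ψ₁ = ζ ∘ ψ₂ ∘ ψ`, where `ζ` lifts to an automorphism `ζ̃`
of `X` (`ζ ∘ h = h ∘ ζ̃`) and `ψ` lifts to an automorphism `ψ̃` of `T` (`ψ ∘ f = f ∘ ψ̃`).
Then `(x, t) ↦ (ζ̃⁻¹ x, ψ̃ t)` is a ℤ-module isomorphism from the fibre product
`{(x, t) : h x = ψ₁ (f t)}` onto the fibre product `{(x, t) : h x = ψ₂ (f t)}`. -/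
theorem double_coset_well_defined
    {X T : Type*} [AddCommGroup X] [AddCommGroup T] [Module ℤ X] [Module ℤ T]
    [Module.Free ℤ X] [Module.Finite ℤ X] [Module.Free ℤ T] [Module.Finite ℤ T]
    (K : Submodule ℤ X) [Finite (X ⧸ K)]
    (f : T →ₗ[ℤ] X ⧸ K) (hf : Function.Surjective f)
    (ψ₁ ψ₂ ψ ζ : (X ⧸ K) ≃ₗ[ℤ] X ⧸ K)
    (hcomp : ∀ a : X ⧸ K, ψ₁ a = ζ (ψ₂ (ψ a)))
    (ζt : X ≃ₗ[ℤ] X) (hζ : ∀ x : X, ζ (K.mkQ x) = K.mkQ (ζt x))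
    (ψt : T ≃ₗ[ℤ] T) (hψ : ∀ t : T, ψ (f t) = f (ψt t)) :
    Submodule.map ((ζt.symm.prodCongr ψt : (X × T) ≃ₗ[ℤ] X × T) : (X × T) →ₗ[ℤ] X × T)
        (fibreProd K.mkQ (ψ₁.toLinearMap ∘ₗ f)) =
      fibreProd K.mkQ (ψ₂.toLinearMap ∘ₗ f) := by
  have hζ' : ∀ x : X, K.mkQ (ζt.symm x) = ζ.symm (K.mkQ x) := by
    intro x
    apply ζ.injective
    rw [hζ, ζt.apply_symm_apply, ζ.apply_symm_apply]
  ext ⟨x, t⟩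
  simp only [Submodule.mem_map, fibreProd, Submodule.mem_mk, AddSubmonoid.mem_mk,
    AddSubsemigroup.mem_mk, Set.mem_setOf_eq, LinearMap.coe_comp, Function.comp_apply,
    LinearEquiv.coe_coe, LinearEquiv.prodCongr_apply, LinearEquiv.coe_toLinearMap]
  constructor
  · rintro ⟨⟨a, b⟩, hab, heq⟩
    obtain ⟨hx, ht⟩ : ζt.symm a = x ∧ ψt b = t := by
      simpa [Prod.ext_iff] using heq
    subst hx ht
    rw [hζ', ← hψ, hab, hcomp]
    simp
  · intro hxt
    refine ⟨(ζt x, ψt.symm t), ?_, by simp⟩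
    show K.mkQ (ζt x) = ψ₁ (f (ψt.symm t))
    have := hψ (ψt.symm t)
    rw [ψt.apply_symm_apply] at this
    rw [← hζ, hxt, hcomp, this]
end

section
/- Let r ≥ 1 and s ≥ 0 be integers and let ψ : ℤ³ → ℤ³ be the ℤ-linear endomorphism defined by ψ(a, b, c) = (2^{r+1}·b, 2^r·a, 2^s·c). Then for every integer m ≥ 1 and every integer k ≥ 0, the m-th iterate ψ^m is not equal to multiplication by 2^k on ℤ³. (Odd powers of ψ are not scalar since they interchange the first two coordinates up to 2-power factors, and for even powers one has ψ²(0,1,0) = 2^{2r+1}·(0,1,0) while ψ²(0,0,1) = 2^{2s}·(0,0,1), and 2r + 1 ≠ 2s.) -/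
private lemma two_pow_inj {a b : ℕ} (h : (2:ℤ)^a = 2^b) : a = b := by
  have : (2:ℕ)^a = 2^b := by exact_mod_cast h
  exact Nat.pow_right_injective (le_refl 2) this

/-- Let `r ≥ 1` and `s ≥ 0` and let `ψ : ℤ³ → ℤ³` be the ℤ-linear map
`ψ(a, b, c) = (2^{r+1}·b, 2^r·a, 2^s·c)`. Then no iterate `ψ^m` with `m ≥ 1` equals
multiplication by a power `2^k` of `2` on `ℤ³`. -/
theorem suzuki_no_smooth_embedding_key (r : ℕ) (hr : 1 ≤ r) (s : ℕ)
    (ψ : ℤ × ℤ × ℤ → ℤ × ℤ × ℤ)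
    (hψ : ∀ a b c : ℤ, ψ (a, b, c) = (2 ^ (r + 1) * b, 2 ^ r * a, 2 ^ s * c)) :
    ∀ m : ℕ, 1 ≤ m → ∀ k : ℕ, ψ^[m] ≠ fun v => (2 ^ k : ℤ) • v := by
  have key : ∀ t : ℕ, ψ^[2*t] (1,0,0) = (2^((2*r+1)*t), 0, 0) ∧
      ψ^[2*t] (0,0,1) = (0, 0, 2^(2*s*t)) := by
    intro t
    induction t with
    | zero => simp
    | succ n ih =>
      have e1 : 2 * (n+1) = 2 + 2*n := by ring
      rw [e1, Function.iterate_add_apply, Function.iterate_add_apply]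
      rw [ih.1, ih.2]
      simp only [show ∀ x : ℤ×ℤ×ℤ, ψ^[2] x = ψ (ψ x) from fun _ => rfl]
      rw [hψ, hψ, hψ, hψ]
      constructor <;> · simp only [Prod.mk.injEq]; ring_nf
                        constructor <;> [skip; constructor] <;> first | rfl | trivial | ring
  intro m hm k hcontra
  rcases Nat.even_or_odd m with ⟨t, ht⟩ | ⟨t, ht⟩
  · have ht2 : m = 2*t := by omega
    have h1 := congrFun hcontra (1,0,0)
    have h2 := congrFun hcontra (0,0,1)
    rw [ht2, (key t).1] at h1
    rw [ht2, (key t).2] at h2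
    simp [Prod.ext_iff] at h1 h2
    have e1 : (2*r+1)*t = k := h1
    have e2 : 2*s*t = k := h2
    have ht0 : 1 ≤ t := by omega
    have : 2*r+1 = 2*s := Nat.eq_of_mul_eq_mul_right ht0 (e1.trans e2.symm)
    omega
  · have h1 := congrFun hcontra (1,0,0)
    rw [show m = 1 + 2*t by omega, Function.iterate_add_apply, (key t).1,
      Function.iterate_one, hψ] at h1
    simp [Prod.ext_iff] at h1
end

section
/- Let X, X₁, X₂ be ℤ-modules, let σ₁ : X₁ → X and σ₂ : X₂ → X be surjective ℤ-module homomorphisms, let K ⊆ X be a submodule, and let P ⊆ X₁ be a submodule. Set S = {(x₁, x₂) ∈ X₁ ⊕ X₂ : σ₁(x₁) = σ₂(x₂)}, let A = X/K with canonical projection h : X → A, and let f : S → A be the (well-defined) homomorphism f(x₁, x₂) = σ₁(x₁) + K. Set A₁ = X/σ₁(P) with canonical projection h₁ : X → A₁, set S₁ = X₁/P, and let f₁ : S₁ → A₁ be the well-defined map f₁(x₁ + P) = σ₁(x₁) + σ₁(P). Then f is surjective, and the ℤ-module homomorphism (x, (s₁, s₂)) ↦ (x, s₁ + P) from the fibre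 product {(x, s) ∈ X ⊕ S : h(x) = f(s)} to the fibre product {(x, y) ∈ X ⊕ S₁ : h₁(x) = f₁(y)} is surjective. -/
/-- Let `σ₁ : X₁ → X`, `σ₂ : X₂ → X` be surjective ℤ-module
homomorphisms, `K ⊆ X` and `P ⊆ X₁` submodules. Let `S = {(x₁,x₂) : σ₁ x₁ = σ₂ x₂}`,
`A = X/K` with projection `h`, and `f : S → A`, `f(x₁,x₂) = σ₁ x₁ + K`. Let
`A₁ = X/σ₁(P)` with projection `h₁`, `S₁ = X₁/P`, and `f₁ : S₁ → A₁`,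
`f₁(x₁ + P) = σ₁ x₁ + σ₁(P)`. Then `f` is surjective, and the homomorphism
`(x, (s₁, s₂)) ↦ (x, s₁ + P)` from the fibre product `{(x, s) ∈ X ⊕ S : h x = f s}` to
the fibre product `{(x, y) ∈ X ⊕ S₁ : h₁ x = f₁ y}` is surjective. -/
theorem completion_of_embeddings_key
    {X X₁ X₂ : Type*} [AddCommGroup X] [AddCommGroup X₁] [AddCommGroup X₂]
    [Module ℤ X] [Module ℤ X₁] [Module ℤ X₂]
    (σ₁ : X₁ →ₗ[ℤ] X) (σ₂ : X₂ →ₗ[ℤ] X)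
    (hσ₁ : Function.Surjective σ₁) (hσ₂ : Function.Surjective σ₂)
    (K : Submodule ℤ X) (P : Submodule ℤ X₁) :
    Function.Surjective (K.mkQ ∘ₗ σ₁ ∘ₗ fpFst σ₁ σ₂) ∧
    ∀ b ∈ fibreProd (Submodule.map σ₁ P).mkQ
        (Submodule.mapQ P (Submodule.map σ₁ P) σ₁
          (fun x hx => Submodule.mem_comap.mpr (Submodule.mem_map_of_mem hx))),
      ∃ a ∈ fibreProd K.mkQ (K.mkQ ∘ₗ σ₁ ∘ₗ fpFst σ₁ σ₂),
        (LinearMap.prodMap (LinearMap.id : X →ₗ[ℤ] X) (P.mkQ ∘ₗ fpFst σ₁ σ₂)) a = b := by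
  constructor
  · intro a
    obtain ⟨x, rfl⟩ := K.mkQ_surjective a
    obtain ⟨x₁, hx₁⟩ := hσ₁ x
    obtain ⟨x₂, hx₂⟩ := hσ₂ x
    refine ⟨⟨(x₁, x₂), ?_⟩, ?_⟩
    · show σ₁ x₁ = σ₂ x₂
      rw [hx₁, hx₂]
    · simp [fpFst, hx₁]
  · rintro ⟨x, y⟩ hb
    obtain ⟨x₁, rfl⟩ := P.mkQ_surjective y
    have hb' : (Submodule.map σ₁ P).mkQ x = (Submodule.map σ₁ P).mkQ (σ₁ x₁) := by
      simpa [fibreProd, Submodule.mkQ_apply, Submodule.mapQ_apply] using hb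
    rw [Submodule.mkQ_apply, Submodule.mkQ_apply, Submodule.Quotient.eq] at hb'
    obtain ⟨p, hp, hps⟩ := hb'
    obtain ⟨x₂, hx₂⟩ := hσ₂ x
    refine ⟨⟨x, ⟨(x₁ + p, x₂), ?_⟩⟩, ?_, ?_⟩
    · show σ₁ (x₁ + p) = σ₂ x₂
      rw [map_add, hps, hx₂]
      abel
    · show K.mkQ x = K.mkQ (σ₁ (x₁ + p))
      rw [map_add, hps]
      congr 1
      abel
    · refine Prod.ext rfl ?_
      show P.mkQ (x₁ + p) = P.mkQ x₁
      rw [map_add, P.mkQ_apply p, (Submodule.Quotient.mk_eq_zero P).mpr hp, add_zero]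
end
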